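/- Let H be a separable infinite-dimensional complex Hilbert space, let E be a complex inner product space of finite dimension N ≥ 1, and let (ψ_n, φ_n)_{n ∈ ℕ} (with ψ_n ∈ H, φ_n ∈ E) be an orthonormal (Hilbert) basis of H × E with the product inner product. Let Θ ⊆ ℕ be a finite set of cardinality N, suppose (φ_n)_{n ∈ Θ} is linearly independent in E, and let T : H → E be the unique continuous linear map with ⟨T y, φ_n⟩_E = −⟨y, ψ_n⟩_H for all y ∈ H and n ∈ Θ. If y ∈ H satisfies ⟨y, ψ_n⟩_H + ⟨T y, φ_n⟩_E = 0 for every n ∈ ℕ∖Θ, then y = 0. -/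

import Mathlib

open scoped InnerProductSpace

/-- With `T : H → E` the continuous linear map satisfying
`⟪T y, φ n⟫ = -⟪y, ψ n⟫` for `n ∈ Θ`, any `y ∈ H` with `⟪y, ψ n⟫ + ⟪T y, φ n⟫ = 0` for every
`n ∉ Θ` must vanish. -/
theorem stmt_4
    {H : Type*} [NormedAddCommGroup H] [InnerProductSpace ℂ H] [CompleteSpace H]
    [TopologicalSpace.SeparableSpace H] (hH : ¬ FiniteDimensional ℂ H)
    {E : Type*} [NormedAddCommGroup E] [InnerProductSpace ℂ E] [FiniteDimensional ℂ E]
    (N : ℕ) (hN : 1 ≤ N) (hE : Module.finrank ℂ E = N)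
    (ψ : ℕ → H) (φ : ℕ → E)
    (hON : Orthonormal ℂ (fun n : ℕ => (WithLp.equiv 2 (H × E)).symm (ψ n, φ n)))
    (hTotal : (Submodule.span ℂ
        (Set.range (fun n : ℕ => (WithLp.equiv 2 (H × E)).symm (ψ n, φ n)))).topologicalClosure
      = ⊤)
    (Θ : Finset ℕ) (hΘ : Θ.card = N)
    (hLI : LinearIndependent ℂ (fun n : Θ => φ n))
    (T : H →L[ℂ] E)
    (hT : ∀ y : H, ∀ n ∈ Θ, ⟪T y, φ n⟫_ℂ = -⟪y, ψ n⟫_ℂ)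
    (y : H)
    (hy : ∀ n ∉ Θ, ⟪y, ψ n⟫_ℂ + ⟪T y, φ n⟫_ℂ = 0) :
    y = 0 := by
  set v : WithLp 2 (H × E) := (WithLp.equiv 2 (H × E)).symm (y, T y) with hv
  have hvz : ∀ n : ℕ, ⟪v, (WithLp.equiv 2 (H × E)).symm (ψ n, φ n)⟫_ℂ = 0 := by
    intro n
    rw [hv, WithLp.prod_inner_apply]
    simp only [WithLp.equiv_symm_apply, WithLp.ofLp_toLp]
    by_cases hn : n ∈ Θ
    · rw [hT y n hn]; ring
    · exact hy n hn
  have hmem : v ∈ (Submodule.span ℂ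
      (Set.range (fun n : ℕ => (WithLp.equiv 2 (H × E)).symm (ψ n, φ n))))ᗮ := by
    apply (Submodule.mem_orthogonal' _ _).2
    intro u hu
    induction hu using Submodule.span_induction with
    | mem x hx => obtain ⟨n, rfl⟩ := hx; exact hvz n
    | zero => simp
    | add _ _ _ _ h1 h2 => rw [inner_add_right, h1, h2, add_zero]
    | smul c _ _ h => rw [inner_smul_right, h, mul_zero]
  have hbot : (Submodule.span ℂ
      (Set.range (fun n : ℕ => (WithLp.equiv 2 (H × E)).symm (ψ n, φ n))))ᗮ = ⊥ :=
    Submodule.topologicalClosure_eq_top_iff.mp hTotal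
  rw [hbot, Submodule.mem_bot] at hmem
  have : (y, T y) = (0 : H × E) := by
    have := congrArg (WithLp.equiv 2 (H × E)) hmem
    simpa [hv] using this
  exact congrArg Prod.fst this
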